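/- (SBA is Smith-consistent.) Let P be a budget proposal, V a vote profile, and ℓ a budget limit with cost(a) ≤ ℓ for every item a ∈ P. Let C₁, …, C_z be the ordered partition of P obtained by iteratively removing Schwartz sets from the majority graph of (P, V), and let B be any greedily pruned budget with respect to C₁, …, C_z and ℓ. Then B is feasible and for every feasible budget B' there is a weak domination path B ⊳⊳⊳ B'; consequently B is a Smith budget, and in particular if a Condorcet-winning budget exists then B equals it. -/
import Mathlib


open Classical

variable {α : Type*} [DecidableEq α]

/-- A vote `v : α → ℕ` ranks item `a` above item `b` iff `v a < v b`.
`v` prefers budget `B` over budget `B'` if `B \ B'` is nonempty and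
every item of `B \ B'` is ranked above every item of `B' \ B`. -/
def Prefers (v : α → ℕ) (B B' : Finset α) : Prop :=
  (B \ B').Nonempty ∧ ∀ a ∈ B \ B', ∀ b ∈ B' \ B, v a < v b

/-- The number of votes in the profile `V` that prefer `B` over `B'`. -/
noncomputable def domCount (V : List (α → ℕ)) (B B' : Finset α) : ℕ :=
  V.countP fun v => decide (Prefers v B B')

/-- `B` dominates `B'` if strictly more than half of the votes prefer `B` over `B'`. -/
def Dominates (V : List (α → ℕ)) (B B' : Finset α) : Prop :=
  2 * domCount V B B' > V.length

/-- `B` weakly dominates `B'` (written `B ⊳ B'`) if `B'` does not dominate `B`. -/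
def WeakDom (V : List (α → ℕ)) (B B' : Finset α) : Prop :=
  ¬ Dominates V B' B

/-- A budget `B` is feasible if it consists of proposed items and its total
cost is within the budget limit `ℓ`. -/
def Feasible (P : Finset α) (cost : α → ℕ) (ℓ : ℕ) (B : Finset α) : Prop :=
  B ⊆ P ∧ ∑ b ∈ B, cost b ≤ ℓ

/-- A Condorcet-winning budget is a feasible budget dominating every other
feasible budget. -/
def CondorcetWinning (P : Finset α) (cost : α → ℕ) (ℓ : ℕ)
    (V : List (α → ℕ)) (B : Finset α) : Prop :=
  Feasible P cost ℓ B ∧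
  ∀ B', Feasible P cost ℓ B' → B' ≠ B → Dominates V B B'

/-- Number of votes ranking `a` above `b`. -/
noncomputable def aboveCount (V : List (α → ℕ)) (a b : α) : ℕ :=
  V.countP fun v => decide (v a < v b)

/-- Arc `(a, b)` of the majority graph: a strict majority of the votes rank
`a` above `b`. -/
def MajArc (V : List (α → ℕ)) (a b : α) : Prop :=
  2 * aboveCount V a b > V.length

/-- Arc `(a, b)` of the weak majority graph: either the majority graph has the
arc `(a, b)`, or it has neither arc between `a` and `b`. -/
def WeakMajArc (V : List (α → ℕ)) (a b : α) : Prop :=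
  MajArc V a b ∨ (¬ MajArc V a b ∧ ¬ MajArc V b a)

/-- A weak majority path `a ⇝ b`: a directed path in the weak majority graph
on the vertex set `P`. -/
def WeakMajPath (P : Finset α) (V : List (α → ℕ)) (a b : α) : Prop :=
  Relation.ReflTransGen (fun x y => x ∈ P ∧ y ∈ P ∧ WeakMajArc V x y) a b

/-- A weak domination path `B ⊳⊳⊳ B'`: a finite sequence of feasible budgets
starting at `B` and ending at `B'`, each weakly dominating the next. -/
def WDPath (P : Finset α) (cost : α → ℕ) (ℓ : ℕ) (V : List (α → ℕ)) :
    Finset α → Finset α → Prop :=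
  Relation.ReflTransGen
    (fun B B' => Feasible P cost ℓ B ∧ Feasible P cost ℓ B' ∧ WeakDom V B B')

/-- A set `X` of feasible budgets is dominant if it is nonempty and every
budget in `X` dominates every feasible budget outside `X`. -/
def DominantSet (P : Finset α) (cost : α → ℕ) (ℓ : ℕ) (V : List (α → ℕ))
    (X : Set (Finset α)) : Prop :=
  X.Nonempty ∧ (∀ B ∈ X, Feasible P cost ℓ B) ∧
  ∀ B ∈ X, ∀ B', Feasible P cost ℓ B' → B' ∉ X → Dominates V B B'

/-- The Smith set of the budgets graph: a minimal dominant set of feasible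
budgets. -/
def IsSmithSet (P : Finset α) (cost : α → ℕ) (ℓ : ℕ) (V : List (α → ℕ))
    (X : Set (Finset α)) : Prop :=
  DominantSet P cost ℓ V X ∧
  ∀ Y, DominantSet P cost ℓ V Y → Y ⊆ X → Y = X

/-- `X` is a Schwartz component of the directed graph with arc relation `E`
restricted to the vertex set `S`: a minimal nonempty subset of `S` with no
arc entering it from outside. -/
def SchwartzComponent (S : Finset α) (E : α → α → Prop) (X : Finset α) : Prop :=
  X ⊆ S ∧ X.Nonempty ∧ (∀ b ∈ S, b ∉ X → ∀ a ∈ X, ¬ E b a) ∧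
  ∀ Y, Y ⊆ X → Y.Nonempty → (∀ b ∈ S, b ∉ Y → ∀ a ∈ Y, ¬ E b a) → Y = X

/-- `X` is the Schwartz set of the directed graph `E` restricted to the vertex
set `S`: the union of all Schwartz components. -/
def IsSchwartzSet (S : Finset α) (E : α → α → Prop) (X : Finset α) : Prop :=
  ∀ a, a ∈ X ↔ ∃ Y, SchwartzComponent S E Y ∧ a ∈ Y

/-- The union of the first `i` components of an ordered partition. -/
def unionUpTo (Cs : List (Finset α)) (i : ℕ) : Finset α :=
  (Cs.take i).foldr (· ∪ ·) ∅

/-- `B` is greedily pruned with respect to the ordered partition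
`C₁, …, C_z` (given as a list `Cs`) and the budget limit `ℓ`: `B` consists of
items of the partition and, for each `i`, `B ∩ C_i` is a maximal subset `S` of
`C_i` such that the cost of `(B ∩ (C₁ ∪ … ∪ C_{i-1})) ∪ S` is at most `ℓ`. -/
def GreedilyPruned (cost : α → ℕ) (ℓ : ℕ) (Cs : List (Finset α))
    (B : Finset α) : Prop :=
  B ⊆ unionUpTo Cs Cs.length ∧
  ∀ i (hi : i < Cs.length),
    (∑ x ∈ (B ∩ unionUpTo Cs i) ∪ (B ∩ Cs.get ⟨i, hi⟩), cost x) ≤ ℓ ∧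
    ∀ S ⊆ Cs.get ⟨i, hi⟩, B ∩ Cs.get ⟨i, hi⟩ ⊆ S →
      (∑ x ∈ (B ∩ unionUpTo Cs i) ∪ S, cost x) ≤ ℓ → S = B ∩ Cs.get ⟨i, hi⟩

/-- The arc relation of the majority graph of `(P, V)`. -/
def MajE (P : Finset α) (V : List (α → ℕ)) (a b : α) : Prop :=
  a ∈ P ∧ b ∈ P ∧ MajArc V a b

set_option linter.unusedSectionVars false
set_option linter.unnecessarySimpa false
-- helpers
lemma countP_disj {β : Type*} (l : List β) (p q : β → Bool)
    (h : ∀ x ∈ l, ¬(p x ∧ q x)) : l.countP p + l.countP q ≤ l.length := by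
  induction l with
  | nil => simp
  | cons a t ih =>
    simp only [List.countP_cons, List.length_cons]
    have := h a (by simp)
    have ht := ih (fun x hx => h x (by simp [hx]))
    by_cases hp : p a <;> by_cases hq : q a <;> simp_all <;> omega

lemma prefers_not_both {v : α → ℕ} {X Y : Finset α}
    (h1 : Prefers v X Y) (h2 : Prefers v Y X) : False := by
  obtain ⟨⟨a, ha⟩, h1'⟩ := h1
  obtain ⟨⟨b, hb⟩, h2'⟩ := h2
  exact absurd (h1' a ha b hb) (by simpa using (h2' b hb a ha).le)

lemma dominates_asymm {V : List (α → ℕ)} {X Y : Finset α}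
    (h : Dominates V X Y) : ¬ Dominates V Y X := by
  intro h'
  have key : domCount V X Y + domCount V Y X ≤ V.length := by
    apply countP_disj
    intro v _ hv
    simp only [decide_eq_true_eq] at hv
    exact prefers_not_both hv.1 hv.2
  unfold Dominates at h h'
  omega

lemma majArc_asymm {V : List (α → ℕ)} {a b : α}
    (h : MajArc V a b) : ¬ MajArc V b a := by
  intro h'
  have key : aboveCount V a b + aboveCount V b a ≤ V.length := by
    apply countP_disj
    intro v _ hv
    simp only [decide_eq_true_eq] at hv
    omega
  unfold MajArc at h h'
  omega

lemma weakDom_of_sdiff_empty {V : List (α → ℕ)} {X Y : Finset α}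
    (h : Y \ X = ∅) : WeakDom V X Y := by
  intro hd
  have : domCount V Y X = 0 := by
    apply List.countP_eq_zero.2
    intro v _
    simp only [decide_eq_true_eq]
    rintro ⟨⟨a, ha⟩, -⟩
    simp [h] at ha
  unfold Dominates at hd
  omega

lemma weakDom_of_pair {V : List (α → ℕ)} {X Y : Finset α} {a b : α}
    (ha : a ∈ Y \ X) (hb : b ∈ X \ Y) (hm : ¬ MajArc V a b) : WeakDom V X Y := by
  intro hd
  have key : domCount V Y X ≤ aboveCount V a b := by
    apply List.countP_mono_left
    intro v _ hv
    simp only [decide_eq_true_eq] at hv ⊢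
    exact hv.2 a ha b hb
  unfold Dominates at hd
  unfold MajArc at hm
  omega
set_option linter.unusedSectionVars false

lemma foldr_union (l : List (Finset α)) (X : Finset α) :
    l.foldr (· ∪ ·) X = l.foldr (· ∪ ·) ∅ ∪ X := by
  induction l with
  | nil => simp
  | cons a t ih => simp [List.foldr_cons, ih, Finset.union_assoc]

lemma unionUpTo_succ (Cs : List (Finset α)) (i : ℕ) (hi : i < Cs.length) :
    unionUpTo Cs (i + 1) = unionUpTo Cs i ∪ Cs.get ⟨i, hi⟩ := by
  unfold unionUpTo
  rw [List.take_succ, List.getElem?_eq_getElem hi]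
  rw [List.foldr_append, foldr_union (Cs.take i)]
  simp

lemma unionUpTo_mono (Cs : List (Finset α)) {i j : ℕ} (h : i ≤ j) (hj : j ≤ Cs.length) :
    unionUpTo Cs i ⊆ unionUpTo Cs j := by
  induction j with
  | zero => simpa [Nat.le_zero.mp h]
  | succ n ih =>
    rcases Nat.lt_or_ge n Cs.length with hn | hn
    · rcases Nat.eq_or_lt_of_le h with rfl | h'
      · exact subset_rfl
      · exact (ih (Nat.lt_succ_iff.mp h') (Nat.le_of_lt hn)).trans
          (by rw [unionUpTo_succ Cs n hn]; exact Finset.subset_union_left)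
    · omega

lemma mem_unionUpTo {Cs : List (Finset α)} {i : ℕ} (hi : i ≤ Cs.length) {x : α}
    (hx : x ∈ unionUpTo Cs i) : ∃ j, ∃ hj : j < Cs.length, j < i ∧ x ∈ Cs.get ⟨j, hj⟩ := by
  induction i with
  | zero => simp [unionUpTo] at hx
  | succ n ih =>
    have hn : n < Cs.length := hi
    rw [unionUpTo_succ Cs n hn] at hx
    rcases Finset.mem_union.mp hx with h | h
    · obtain ⟨j, hj, hj', hxj⟩ := ih (Nat.le_of_lt hn) h
      exact ⟨j, hj, Nat.lt_succ_of_lt hj', hxj⟩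
    · exact ⟨n, hn, Nat.lt_succ_self n, h⟩

lemma unionUpTo_of_le {Cs : List (Finset α)} {i : ℕ} (h : Cs.length ≤ i) :
    unionUpTo Cs i = unionUpTo Cs Cs.length := by
  unfold unionUpTo
  rw [List.take_of_length_le h, List.take_length]

lemma get_subset_unionUpTo {Cs : List (Finset α)} {j i : ℕ} (hj : j < Cs.length)
    (h : j < i) : Cs.get ⟨j, hj⟩ ⊆ unionUpTo Cs i := by
  induction i with
  | zero => omega
  | succ n ih =>
    rcases Nat.lt_or_ge n Cs.length with hn | hn
    · rw [unionUpTo_succ Cs n hn]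
      rcases Nat.lt_or_ge j n with h' | h'
      · exact (ih h').trans Finset.subset_union_left
      · have : j = n := by omega
        subst this
        exact Finset.subset_union_right
    · have he : unionUpTo Cs (n + 1) = unionUpTo Cs n := by
        unfold unionUpTo
        rw [List.take_of_length_le (by omega), List.take_of_length_le hn]
      rw [he]
      exact ih (by omega)
lemma get_subset_sdiff {P : Finset α} {V : List (α → ℕ)} {Cs : List (Finset α)}
    (hschwartz : ∀ i (hi : i < Cs.length),
      IsSchwartzSet (P \ unionUpTo Cs i) (MajE P V) (Cs.get ⟨i, hi⟩))
    {i : ℕ} (hi : i < Cs.length) : Cs.get ⟨i, hi⟩ ⊆ P \ unionUpTo Cs i := by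
  intro x hx
  obtain ⟨Y, hY, hxY⟩ := (hschwartz i hi x).1 hx
  exact hY.1 hxY

lemma not_maj_later {P : Finset α} {V : List (α → ℕ)} {Cs : List (Finset α)}
    (hschwartz : ∀ i (hi : i < Cs.length),
      IsSchwartzSet (P \ unionUpTo Cs i) (MajE P V) (Cs.get ⟨i, hi⟩))
    {j k : ℕ} (hj : j < Cs.length) (hk : k < Cs.length) (hjk : j < k)
    {a b : α} (ha : a ∈ Cs.get ⟨k, hk⟩) (hb : b ∈ Cs.get ⟨j, hj⟩) :
    ¬ MajArc V a b := by
  intro hm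
  obtain ⟨Y, hY, hbY⟩ := (hschwartz j hj b).1 hb
  have haSk := get_subset_sdiff hschwartz hk ha
  rw [Finset.mem_sdiff] at haSk
  have haSj : a ∈ P \ unionUpTo Cs j := by
    rw [Finset.mem_sdiff]
    refine ⟨haSk.1, fun h => haSk.2 (unionUpTo_mono Cs (Nat.le_of_lt hjk) (Nat.le_of_lt hk) h)⟩
  have haY : a ∉ Y := by
    intro haY
    have : a ∈ Cs.get ⟨j, hj⟩ := (hschwartz j hj a).2 ⟨Y, hY, haY⟩
    exact haSk.2 (get_subset_unionUpTo hj hjk this)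
  have hbP : b ∈ P := (Finset.mem_sdiff.1 (get_subset_sdiff hschwartz hj hb)).1
  exact hY.2.2.1 a haSj haY b hbY ⟨haSk.1, hbP, hm⟩

lemma component_path {P S : Finset α} {V : List (α → ℕ)} {X : Finset α}
    (hS : SchwartzComponent S (MajE P V) X) {b a : α} (hb : b ∈ X) (ha : a ∈ X) :
    Relation.ReflTransGen (fun x y => x ∈ P ∧ y ∈ P ∧ ¬ MajArc V y x) b a := by
  set r : α → α → Prop := fun x y => x ∈ P ∧ y ∈ P ∧ ¬ MajArc V y x with hr
  set Y := X.filter (fun x => Relation.ReflTransGen r x a) with hYdef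
  have hYX : Y ⊆ X := Finset.filter_subset _ _
  have haY : a ∈ Y := Finset.mem_filter.2 ⟨ha, Relation.ReflTransGen.refl⟩
  have hclosed : ∀ c ∈ S, c ∉ Y → ∀ x ∈ Y, ¬ MajE P V c x := by
    intro c hcS hcY x hxY hE
    by_cases hcX : c ∈ X
    · apply hcY
      refine Finset.mem_filter.2 ⟨hcX, ?_⟩
      exact Relation.ReflTransGen.head
        ⟨hE.1, hE.2.1, majArc_asymm hE.2.2⟩ (Finset.mem_filter.1 hxY).2
    · exact hS.2.2.1 c hcS hcX x (hYX hxY) hE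
  have hYeq : Y = X := hS.2.2.2 Y hYX ⟨a, haY⟩ hclosed
  have hbY : b ∈ Y := hYeq ▸ hb
  exact (Finset.mem_filter.1 hbY).2

lemma r_path {P : Finset α} {V : List (α → ℕ)} {Cs : List (Finset α)}
    (hschwartz : ∀ i (hi : i < Cs.length),
      IsSchwartzSet (P \ unionUpTo Cs i) (MajE P V) (Cs.get ⟨i, hi⟩))
    {j k : ℕ} (hj : j < Cs.length) (hk : k < Cs.length) (hjk : j ≤ k)
    {b a : α} (hb : b ∈ Cs.get ⟨j, hj⟩) (ha : a ∈ Cs.get ⟨k, hk⟩) :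
    Relation.ReflTransGen (fun x y => x ∈ P ∧ y ∈ P ∧ ¬ MajArc V y x) b a := by
  have hbP : b ∈ P := (Finset.mem_sdiff.1 (get_subset_sdiff hschwartz hj hb)).1
  have haP : a ∈ P := (Finset.mem_sdiff.1 (get_subset_sdiff hschwartz hk ha)).1
  rcases Nat.lt_or_ge j k with h | h
  · exact Relation.ReflTransGen.single ⟨hbP, haP, not_maj_later hschwartz hj hk h ha hb⟩
  · have : j = k := by omega
    subst this
    have hab : a ∈ Cs.get ⟨j, hj⟩ := ha
    obtain ⟨Yb, hYb, hbYb⟩ := (hschwartz j hj b).1 hb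
    by_cases haYb : a ∈ Yb
    · exact component_path hYb hbYb haYb
    · have haS : a ∈ P \ unionUpTo Cs j := get_subset_sdiff hschwartz hj hab
      have := hYb.2.2.1 a haS haYb b hbYb
      exact Relation.ReflTransGen.single ⟨hbP, haP, fun hm => this ⟨haP, hbP, hm⟩⟩

lemma singleton_wdpath {P : Finset α} {V : List (α → ℕ)} {cost : α → ℕ} {ℓ : ℕ}
    (hcost : ∀ x ∈ P, cost x ≤ ℓ) {b a : α}
    (h : Relation.ReflTransGen (fun x y => x ∈ P ∧ y ∈ P ∧ ¬ MajArc V y x) b a) :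
    WDPath P cost ℓ V {b} {a} := by
  induction h using Relation.ReflTransGen.head_induction_on with
  | refl => exact Relation.ReflTransGen.refl
  | @head x y hr hrest ih =>
    refine Relation.ReflTransGen.head ⟨?_, ?_, ?_⟩ ih
    · exact ⟨Finset.singleton_subset_iff.2 hr.1, by simpa using hcost x hr.1⟩
    · exact ⟨Finset.singleton_subset_iff.2 hr.2.1, by simpa using hcost y hr.2.1⟩
    · by_cases hxy : y = x
      · subst hxy; exact weakDom_of_sdiff_empty (by simp)
      · exact weakDom_of_pair (a := y) (b := x)
          (by simp [Finset.mem_sdiff, hxy]) (by simp [Finset.mem_sdiff, Ne.symm hxy]) hr.2.2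

lemma first_entry {P : Finset α} {V : List (α → ℕ)} {B' : Finset α} {b a : α}
    (h : Relation.ReflTransGen (fun x y => x ∈ P ∧ y ∈ P ∧ ¬ MajArc V y x) b a)
    (hb : b ∉ B') (hbP : b ∈ P) (ha : a ∈ B') :
    ∃ c, c ∉ B' ∧ c ∈ P ∧
      Relation.ReflTransGen (fun x y => x ∈ P ∧ y ∈ P ∧ ¬ MajArc V y x) b c ∧
      ∃ d ∈ B', ¬ MajArc V d c := by
  induction h using Relation.ReflTransGen.head_induction_on with
  | refl => exact absurd ha hb
  | @head x y hr hrest ih =>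
    by_cases hyB : y ∈ B'
    · exact ⟨x, hb, hbP, Relation.ReflTransGen.refl, y, hyB, hr.2.2⟩
    · obtain ⟨c, hc1, hc2, hc3, hc4⟩ := ih hyB hr.2.1
      exact ⟨c, hc1, hc2, Relation.ReflTransGen.head hr hc3, hc4⟩
lemma feasible_empty (P : Finset α) (cost : α → ℕ) (ℓ : ℕ) :
    Feasible P cost ℓ (∅ : Finset α) := ⟨Finset.empty_subset _, by simp⟩

lemma exists_smith (P : Finset α) (cost : α → ℕ) (ℓ : ℕ) (V : List (α → ℕ)) :
    ∃ X, IsSmithSet P cost ℓ V X := by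
  have hFfin : {B : Finset α | Feasible P cost ℓ B}.Finite := by
    apply Set.Finite.subset (P.powerset.finite_toSet)
    intro B hB
    simpa [Finset.mem_powerset] using hB.1
  have hFdom : DominantSet P cost ℓ V {B : Finset α | Feasible P cost ℓ B} :=
    ⟨⟨∅, feasible_empty P cost ℓ⟩, fun B hB => hB, fun B _ B' hB' hB'n => absurd hB' hB'n⟩
  have hcomp : ∀ X Y : Set (Finset α), DominantSet P cost ℓ V X →
      DominantSet P cost ℓ V Y → X ⊆ Y ∨ Y ⊆ X := by
    intro X Y hX hY
    by_contra h
    push_neg at h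
    obtain ⟨Bx, hBxX, hBxY⟩ := Set.not_subset.mp h.1
    obtain ⟨By', hByY, hByX⟩ := Set.not_subset.mp h.2
    have d1 : Dominates V Bx By' := hX.2.2 Bx hBxX By' (hY.2.1 By' hByY) hByX
    have d2 : Dominates V By' Bx := hY.2.2 By' hByY Bx (hX.2.1 Bx hBxX) hBxY
    exact dominates_asymm d1 d2
  set N : Set ℕ := {n | ∃ X, DominantSet P cost ℓ V X ∧ X.ncard = n} with hN
  have hNne : N.Nonempty := ⟨_, _, hFdom, rfl⟩
  obtain ⟨X₀, hX₀dom, hX₀card⟩ := Nat.sInf_mem hNne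
  have hX₀fin : X₀.Finite := hFfin.subset (fun B hB => hX₀dom.2.1 B hB)
  have hmin : ∀ Y, DominantSet P cost ℓ V Y → X₀ ⊆ Y := by
    intro Y hY
    rcases hcomp X₀ Y hX₀dom hY with h | h
    · exact h
    · have hYcard : sInf N ≤ Y.ncard := Nat.sInf_le ⟨Y, hY, rfl⟩
      have : Y = X₀ := Set.eq_of_subset_of_ncard_le h (by omega) hX₀fin
      exact this ▸ subset_rfl
  exact ⟨X₀, hX₀dom, fun Y hY hYX => (hmin Y hY).antisymm' hYX ▸ rfl⟩

lemma mem_of_wdpath_dominant {P : Finset α} {cost : α → ℕ} {ℓ : ℕ} {V : List (α → ℕ)}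
    {D : Set (Finset α)} (hD : DominantSet P cost ℓ V D) {B B'' : Finset α}
    (h : WDPath P cost ℓ V B B'') (hB'' : B'' ∈ D) : B ∈ D := by
  induction h using Relation.ReflTransGen.head_induction_on with
  | refl => exact hB''
  | @head x y hstep hrest ih =>
    by_contra hx
    exact hstep.2.2 (hD.2.2 y ih x hstep.1 hx)

lemma eq_of_wdpath_condorcet {P : Finset α} {cost : α → ℕ} {ℓ : ℕ} {V : List (α → ℕ)}
    {Bstar : Finset α} (hC : CondorcetWinning P cost ℓ V Bstar) {B : Finset α}
    (h : WDPath P cost ℓ V B Bstar) : B = Bstar := by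
  induction h using Relation.ReflTransGen.head_induction_on with
  | refl => rfl
  | @head x y hstep hrest ih =>
    have hy : y = Bstar := ih
    subst hy
    by_contra hne
    exact hstep.2.2 (hC.2 x hstep.1 hne)
lemma key_path {P : Finset α} {cost : α → ℕ} {ℓ : ℕ} {V : List (α → ℕ)}
    (hcost : ∀ a ∈ P, cost a ≤ ℓ) {Cs : List (Finset α)}
    (hschwartz : ∀ i (hi : i < Cs.length),
      IsSchwartzSet (P \ unionUpTo Cs i) (MajE P V) (Cs.get ⟨i, hi⟩))
    (hcover : unionUpTo Cs Cs.length = P)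
    {B : Finset α} (hgreedy : GreedilyPruned cost ℓ Cs B)
    (hBfeas : Feasible P cost ℓ B)
    {B' : Finset α} (hB' : Feasible P cost ℓ B') :
    WDPath P cost ℓ V B B' := by
  by_cases hsub : B' \ B = ∅
  · exact Relation.ReflTransGen.single ⟨hBfeas, hB', weakDom_of_sdiff_empty hsub⟩
  obtain ⟨astar, hastar⟩ := Finset.nonempty_iff_ne_empty.2 hsub
  rw [Finset.mem_sdiff] at hastar
  have hastarP : astar ∈ P := hB'.1 hastar.1
  obtain ⟨k, hk, -, hak⟩ := mem_unionUpTo le_rfl (show astar ∈ unionUpTo Cs Cs.length from hcover ▸ hastarP)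
  have hmax := (hgreedy.2 k hk).2
  set Ck := Cs.get ⟨k, hk⟩ with hCk
  set S : Finset α := insert astar (B ∩ Ck) with hS
  have hSC : S ⊆ Ck := Finset.insert_subset hak Finset.inter_subset_right
  have hBS : B ∩ Ck ⊆ S := Finset.subset_insert _ _
  have hSne : S ≠ B ∩ Ck := by
    intro h
    have : astar ∈ B ∩ Ck := h ▸ Finset.mem_insert_self _ _
    exact hastar.2 (Finset.mem_inter.1 this).1
  have hbig : ¬ (∑ x ∈ (B ∩ unionUpTo Cs k) ∪ S, cost x ≤ ℓ) :=
    fun h => hSne (hmax S hSC hBS h)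
  by_cases hall : ∀ b ∈ B ∩ (unionUpTo Cs k ∪ Ck), b ∈ B'
  · exfalso
    apply hbig
    refine le_trans (Finset.sum_le_sum_of_subset ?_) hB'.2
    intro x hx
    rcases Finset.mem_union.1 hx with hx | hx
    · have hxB := Finset.mem_inter.1 hx
      exact hall x (Finset.mem_inter.2 ⟨hxB.1, Finset.mem_union_left _ hxB.2⟩)
    · rcases Finset.mem_insert.1 hx with rfl | hx
      · exact hastar.1
      · have hxB := Finset.mem_inter.1 hx
        exact hall x (Finset.mem_inter.2 ⟨hxB.1, Finset.mem_union_right _ hxB.2⟩)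
  · push_neg at hall
    obtain ⟨bstar, hbmem, hbB'⟩ := hall
    have hbB : bstar ∈ B := (Finset.mem_inter.1 hbmem).1
    have hbP : bstar ∈ P := hBfeas.1 hbB
    obtain ⟨j, hj, hjk, hbj⟩ : ∃ j, ∃ hj : j < Cs.length, j ≤ k ∧ bstar ∈ Cs.get ⟨j, hj⟩ := by
      rcases Finset.mem_union.1 (Finset.mem_inter.1 hbmem).2 with h | h
      · obtain ⟨j, hj, hjk, hbj⟩ := mem_unionUpTo (Nat.le_of_lt hk) h
        exact ⟨j, hj, Nat.le_of_lt hjk, hbj⟩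
      · exact ⟨k, hk, le_rfl, h⟩
    have hpath := r_path hschwartz hj hk hjk hbj hak
    obtain ⟨c, hcB', hcP, hcpath, d, hdB', hdc⟩ := first_entry hpath hbB' hbP hastar.1
    have hfb : Feasible P cost ℓ {bstar} :=
      ⟨Finset.singleton_subset_iff.2 hbP, by simpa using hcost bstar hbP⟩
    have hfc : Feasible P cost ℓ {c} :=
      ⟨Finset.singleton_subset_iff.2 hcP, by simpa using hcost c hcP⟩
    have step1 : WDPath P cost ℓ V B {bstar} :=
      Relation.ReflTransGen.single ⟨hBfeas, hfb,
        weakDom_of_sdiff_empty (Finset.sdiff_eq_empty_iff_subset.2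
          (Finset.singleton_subset_iff.2 hbB))⟩
    have step2 : WDPath P cost ℓ V {bstar} {c} := singleton_wdpath hcost hcpath
    have step3 : WDPath P cost ℓ V {c} B' := by
      refine Relation.ReflTransGen.single ⟨hfc, hB', ?_⟩
      refine weakDom_of_pair (a := d) (b := c) ?_ ?_ hdc
      · exact Finset.mem_sdiff.2 ⟨hdB', by
          simp only [Finset.mem_singleton]
          rintro rfl
          exact hcB' hdB'⟩
      · exact Finset.mem_sdiff.2 ⟨Finset.mem_singleton_self c, hcB'⟩
    exact step1.trans (step2.trans step3)

/-- SBA is Smith-consistent: if `C₁, …, C_z` is the ordered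
partition of `P` obtained by iteratively removing Schwartz sets from the
majority graph of `(P, V)`, every item fits within the budget limit, and `B`
is a greedily pruned budget w.r.t. `C₁, …, C_z` and `ℓ`, then `B` is feasible,
has a weak domination path to every feasible budget, is a Smith budget, and
equals the Condorcet-winning budget whenever one exists. -/
theorem sba_is_smith_consistent (P : Finset α) (cost : α → ℕ) (ℓ : ℕ)
    (V : List (α → ℕ)) (hV : ∀ v ∈ V, Set.InjOn v ↑P)
    (hcost : ∀ a ∈ P, cost a ≤ ℓ)
    (Cs : List (Finset α))
    (hschwartz : ∀ i (hi : i < Cs.length),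
      IsSchwartzSet (P \ unionUpTo Cs i) (MajE P V) (Cs.get ⟨i, hi⟩))
    (hcover : unionUpTo Cs Cs.length = P)
    (B : Finset α) (hgreedy : GreedilyPruned cost ℓ Cs B) :
    Feasible P cost ℓ B ∧
    (∀ B', Feasible P cost ℓ B' → WDPath P cost ℓ V B B') ∧
    (∃ X, IsSmithSet P cost ℓ V X ∧ B ∈ X) ∧
    (∀ Bstar, CondorcetWinning P cost ℓ V Bstar → B = Bstar) := by
  have hBP : B ⊆ P := hcover ▸ hgreedy.1
  have hBfeas : Feasible P cost ℓ B := by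
    refine ⟨hBP, ?_⟩
    by_cases hlen : Cs.length = 0
    · have : B = ∅ := by
        have h0 : unionUpTo Cs Cs.length = (∅ : Finset α) := by
          rw [hlen]; rfl
        exact Finset.subset_empty.1 (h0 ▸ hgreedy.1)
      simp [this]
    · set m := Cs.length - 1 with hm
      have hmlt : m < Cs.length := by omega
      have hsum := (hgreedy.2 m hmlt).1
      have hEq : (B ∩ unionUpTo Cs m) ∪ (B ∩ Cs.get ⟨m, hmlt⟩) = B := by
        rw [← Finset.inter_union_distrib_left, ← unionUpTo_succ Cs m hmlt]
        have : m + 1 = Cs.length := by omega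
        rw [this, hcover]
        exact Finset.inter_eq_left.2 hBP
      rwa [hEq] at hsum
  have hpaths : ∀ B', Feasible P cost ℓ B' → WDPath P cost ℓ V B B' :=
    fun B' hB' => key_path hcost hschwartz hcover hgreedy hBfeas hB'
  refine ⟨hBfeas, hpaths, ?_, ?_⟩
  · obtain ⟨X, hX⟩ := exists_smith P cost ℓ V
    refine ⟨X, hX, ?_⟩
    obtain ⟨B'', hB''⟩ := hX.1.1
    exact mem_of_wdpath_dominant hX.1 (hpaths B'' (hX.1.2.1 B'' hB'')) hB''
  · intro Bstar hC
    exact eq_of_wdpath_condorcet hC (hpaths Bstar hC.1)
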